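/- arXiv:2311.04450 — 12 statements merged into one kernel-verified Lean document; each statement's English description precedes it below -/
import Mathlib

section
/- Let a, b, c, d, e be real numbers with e > 1, and let f = (ab + cd + ace + bde + √(Δ_{ade})·√(Δ_{bce}))/(e² − 1), where Δ_{xyz} = x² + y² + z² + 2xyz − 1 and we assume Δ_{ade} ≥ 0 and Δ_{bce} ≥ 0. Then a² + b² + c² + d² + e² + f² + 2(ade + bce + abf + cdf + abcd + acef + bdef) − a²c² − b²d² − e²f² − 1 = 0. -/
/-- The discriminant of inversive distance. -/
def Delta (x y z : ℝ) : ℝ := x ^ 2 + y ^ 2 + z ^ 2 + 2 * x * y * z - 1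

theorem generalized_ptolemy (a b c d e f : ℝ) (he : 1 < e)
    (hade : 0 ≤ Delta a d e) (hbce : 0 ≤ Delta b c e)
    (hf : f = (a * b + c * d + a * c * e + b * d * e +
      Real.sqrt (Delta a d e) * Real.sqrt (Delta b c e)) / (e ^ 2 - 1)) :
    a ^ 2 + b ^ 2 + c ^ 2 + d ^ 2 + e ^ 2 + f ^ 2
      + 2 * (a * d * e + b * c * e + a * b * f + c * d * f + a * b * c * d
        + a * c * e * f + b * d * e * f)
      - a ^ 2 * c ^ 2 - b ^ 2 * d ^ 2 - e ^ 2 * f ^ 2 - 1 = 0 := by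
  have he2 : e ^ 2 - 1 ≠ 0 := by nlinarith
  have hs : (Real.sqrt (Delta a d e) * Real.sqrt (Delta b c e)) ^ 2 =
      (a ^ 2 + d ^ 2 + e ^ 2 + 2 * a * d * e - 1) *
      (b ^ 2 + c ^ 2 + e ^ 2 + 2 * b * c * e - 1) := by
    rw [mul_pow, Real.sq_sqrt hade, Real.sq_sqrt hbce]; unfold Delta; ring
  subst hf
  field_simp
  linear_combination (-(e ^ 2 - 1)) * hs
end

section
/- With a, b, c, d, e real, e > 1, Δ_{ade} ≥ 0, Δ_{bce} ≥ 0, and f = (ab + cd + ace + bde + √(Δ_{ade})√(Δ_{bce}))/(e² − 1), if moreover ((d + ae)√(Δ_{bce}) + (c + be)√(Δ_{ade}))/(e² − 1) ≥ 0, then Δ_{abf} = (((d + ae)√(Δ_{bce}) + (c + be)√(Δ_{ade}))/(e² − 1))², i.e. √(Δ_{abf}) = ((d + ae)√(Δ_{bce}) + (c + be)√(Δ_{ade}))/(e² − 1). -/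
theorem sqrt_delta_abf (a b c d e f : ℝ) (he : 1 < e)
    (hade : 0 ≤ Delta a d e) (hbce : 0 ≤ Delta b c e)
    (hf : f = (a * b + c * d + a * c * e + b * d * e +
      Real.sqrt (Delta a d e) * Real.sqrt (Delta b c e)) / (e ^ 2 - 1))
    (hpos : 0 ≤ ((d + a * e) * Real.sqrt (Delta b c e)
      + (c + b * e) * Real.sqrt (Delta a d e)) / (e ^ 2 - 1)) :
    Delta a b f = (((d + a * e) * Real.sqrt (Delta b c e)
      + (c + b * e) * Real.sqrt (Delta a d e)) / (e ^ 2 - 1)) ^ 2 ∧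
    Real.sqrt (Delta a b f) = ((d + a * e) * Real.sqrt (Delta b c e)
      + (c + b * e) * Real.sqrt (Delta a d e)) / (e ^ 2 - 1) := by
  have hD : e ^ 2 - 1 ≠ 0 := by nlinarith
  set P := Real.sqrt (Delta a d e) with hP
  set Q := Real.sqrt (Delta b c e) with hQ
  have hP2 : P ^ 2 = Delta a d e := Real.sq_sqrt hade
  have hQ2 : Q ^ 2 = Delta b c e := Real.sq_sqrt hbce
  have hfD : f * (e ^ 2 - 1) = a * b + c * d + a * c * e + b * d * e + P * Q := by
    rw [hf]; field_simp
  have key : Delta a b f * (e ^ 2 - 1) ^ 2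
      = ((d + a * e) * Q + (c + b * e) * P) ^ 2 := by
    unfold Delta at *
    linear_combination (2 * a * b * (e ^ 2 - 1) + f * (e ^ 2 - 1)
        + (a * b + c * d + a * c * e + b * d * e + P * Q)) * hfD
      + (Q ^ 2 - (c + b * e) ^ 2) * hP2
      + ((a ^ 2 + d ^ 2 + e ^ 2 + 2 * a * d * e - 1) - (d + a * e) ^ 2) * hQ2
  have h1 : Delta a b f = (((d + a * e) * Q + (c + b * e) * P) / (e ^ 2 - 1)) ^ 2 := by
    rw [div_pow, eq_div_iff (pow_ne_zero 2 hD), key]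
  exact ⟨h1, by rw [h1, Real.sqrt_sq hpos]⟩
end

section
/- With the same hypotheses, √(Δ_{cdf}) = ((a + de)√(Δ_{bce}) + (b + ce)√(Δ_{ade}))/(e² − 1), assuming the right-hand side is nonnegative; i.e. Δ_{cdf} equals the square of the right-hand side. -/
theorem sqrt_delta_cdf (a b c d e f : ℝ) (he : 1 < e)
    (hade : 0 ≤ Delta a d e) (hbce : 0 ≤ Delta b c e)
    (hf : f = (a * b + c * d + a * c * e + b * d * e +
      Real.sqrt (Delta a d e) * Real.sqrt (Delta b c e)) / (e ^ 2 - 1))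
    (hpos : 0 ≤ ((a + d * e) * Real.sqrt (Delta b c e)
      + (b + c * e) * Real.sqrt (Delta a d e)) / (e ^ 2 - 1)) :
    Delta c d f = (((a + d * e) * Real.sqrt (Delta b c e)
      + (b + c * e) * Real.sqrt (Delta a d e)) / (e ^ 2 - 1)) ^ 2 ∧
    Real.sqrt (Delta c d f) = ((a + d * e) * Real.sqrt (Delta b c e)
      + (b + c * e) * Real.sqrt (Delta a d e)) / (e ^ 2 - 1) := by
  set P := Real.sqrt (Delta a d e) with hPdef
  set Q := Real.sqrt (Delta b c e) with hQdef
  have hP : P ^ 2 = Delta a d e := Real.sq_sqrt hade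
  have hQ : Q ^ 2 = Delta b c e := Real.sq_sqrt hbce
  have hs : e ^ 2 - 1 ≠ 0 := by nlinarith
  have h1 : Delta c d f = (((a + d * e) * Q + (b + c * e) * P) / (e ^ 2 - 1)) ^ 2 := by
    have hfe : f * (e ^ 2 - 1) = a * b + c * d + a * c * e + b * d * e + P * Q := by
      rw [hf]; field_simp
    rw [div_pow, eq_div_iff (pow_ne_zero 2 hs)]
    simp only [Delta] at hP hQ ⊢
    linear_combination (f * (e ^ 2 - 1) + (a * b + c * d + a * c * e + b * d * e + P * Q)
        + 2 * c * d * (e ^ 2 - 1)) * hfe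
      + (Q ^ 2 - (b + c * e) ^ 2) * hP + ((e ^ 2 - 1) * (1 - d ^ 2)) * hQ
  exact ⟨h1, by rw [h1, Real.sqrt_sq hpos]⟩
end

section
/- Let p, q, r > 1 and a, b, c > 1 be real numbers (hyperbolic cosines of radii and inversive distances). Set x = qr + a√(q² − 1)√(r² − 1), y = rp + b√(r² − 1)√(p² − 1), z = pq + c√(p² − 1)√(q² − 1), and Ξ = p²(1 − x²) + q²(1 − y²) + r²(1 − z²) + 2pq(xy − z) + 2pr(xz − y) + 2qr(yz − x). Then 1 + 2xyz − x² − y² − z² − Ξ = (p² − 1)(q² − 1)(r² − 1)(a² + b² + c² + 2abc − 1). -/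
theorem xi_delta_identity (p q r a b c : ℝ)
    (hp : 1 < p) (hq : 1 < q) (hr : 1 < r)
    (ha : 1 < a) (hb : 1 < b) (hc : 1 < c)
    (x y z Xi : ℝ)
    (hx : x = q * r + a * Real.sqrt (q ^ 2 - 1) * Real.sqrt (r ^ 2 - 1))
    (hy : y = r * p + b * Real.sqrt (r ^ 2 - 1) * Real.sqrt (p ^ 2 - 1))
    (hz : z = p * q + c * Real.sqrt (p ^ 2 - 1) * Real.sqrt (q ^ 2 - 1))
    (hXi : Xi = p ^ 2 * (1 - x ^ 2) + q ^ 2 * (1 - y ^ 2) + r ^ 2 * (1 - z ^ 2)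
      + 2 * p * q * (x * y - z) + 2 * p * r * (x * z - y) + 2 * q * r * (y * z - x)) :
    1 + 2 * x * y * z - x ^ 2 - y ^ 2 - z ^ 2 - Xi
      = (p ^ 2 - 1) * (q ^ 2 - 1) * (r ^ 2 - 1)
        * (a ^ 2 + b ^ 2 + c ^ 2 + 2 * a * b * c - 1) := by
  set P := Real.sqrt (p ^ 2 - 1) with hP
  set Q := Real.sqrt (q ^ 2 - 1) with hQ
  set R := Real.sqrt (r ^ 2 - 1) with hR
  have hP2 : P ^ 2 = p ^ 2 - 1 := Real.sq_sqrt (by nlinarith)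
  have hQ2 : Q ^ 2 = q ^ 2 - 1 := Real.sq_sqrt (by nlinarith)
  have hR2 : R ^ 2 = r ^ 2 - 1 := Real.sq_sqrt (by nlinarith)
  subst hx hy hz hXi
  linear_combination ((-1*c^2*Q^2) + (-1*b^2*R^2) + (2*a*b*c*Q^2*R^2) + (r^2*c^2*Q^2) + (q^2*b^2*R^2)) * hP2 + ((c^2) + (-2*a*b*c*R^2) + (-1*a^2*R^2) + (-1*r^2*c^2) + (-1*p^2*c^2) + (2*p^2*a*b*c*R^2) + (p^2*a^2*R^2) + (p^2*r^2*c^2)) * hQ2 + ((b^2) + (2*a*b*c) + (a^2) + (-1*q^2*b^2) + (-2*q^2*a*b*c) + (-1*q^2*a^2) + (-1*p^2*b^2) + (-2*p^2*a*b*c) + (-1*p^2*a^2) + (p^2*q^2*b^2) + (2*p^2*q^2*a*b*c) + (p^2*q^2*a^2)) * hR2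
end

section
/- Let p̂, q̂, r̂ ∈ (0,1) and a, b, c > 1. Set p = (1 − p̂²)^{−1/2}, q = (1 − q̂²)^{−1/2}, r = (1 − r̂²)^{−1/2}, and x = qr + a√(q² − 1)√(r² − 1), y = rp + b√(r² − 1)√(p² − 1), z = pq + c√(p² − 1)√(q² − 1). Let Ξ = p²(1 − x²) + q²(1 − y²) + r²(1 − z²) + 2pq(xy − z) + 2pr(xz − y) + 2qr(yz − x). Then (1 − p̂²)(1 − q̂²)(1 − r̂²)·Ξ = (1 − c²)p̂²q̂² + (1 − b²)p̂²r̂² + (1 − a²)q̂²r̂² + 2((a + bc)p̂ + (b + ac)q̂ + (c + ab)r̂)·p̂q̂r̂. -/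
set_option maxHeartbeats 2000000

lemma rpow_neg_half_eq_inv_sqrt {s : ℝ} (hs : 0 < s) :
    s ^ (-(1 : ℝ) / 2) = (Real.sqrt s)⁻¹ := by
  rw [Real.sqrt_eq_rpow, ← Real.rpow_neg hs.le]
  norm_num

theorem xi_tanh_identity (p' q' r' a b c : ℝ)
    (hp' : p' ∈ Set.Ioo (0 : ℝ) 1) (hq' : q' ∈ Set.Ioo (0 : ℝ) 1)
    (hr' : r' ∈ Set.Ioo (0 : ℝ) 1)
    (ha : 1 < a) (hb : 1 < b) (hc : 1 < c)
    (p q r x y z Xi : ℝ)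
    (hp : p = (1 - p' ^ 2) ^ (-(1 : ℝ) / 2))
    (hq : q = (1 - q' ^ 2) ^ (-(1 : ℝ) / 2))
    (hr : r = (1 - r' ^ 2) ^ (-(1 : ℝ) / 2))
    (hx : x = q * r + a * Real.sqrt (q ^ 2 - 1) * Real.sqrt (r ^ 2 - 1))
    (hy : y = r * p + b * Real.sqrt (r ^ 2 - 1) * Real.sqrt (p ^ 2 - 1))
    (hz : z = p * q + c * Real.sqrt (p ^ 2 - 1) * Real.sqrt (q ^ 2 - 1))
    (hXi : Xi = p ^ 2 * (1 - x ^ 2) + q ^ 2 * (1 - y ^ 2) + r ^ 2 * (1 - z ^ 2)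
      + 2 * p * q * (x * y - z) + 2 * p * r * (x * z - y) + 2 * q * r * (y * z - x)) :
    (1 - p' ^ 2) * (1 - q' ^ 2) * (1 - r' ^ 2) * Xi
      = (1 - c ^ 2) * p' ^ 2 * q' ^ 2 + (1 - b ^ 2) * p' ^ 2 * r' ^ 2
        + (1 - a ^ 2) * q' ^ 2 * r' ^ 2
        + 2 * ((a + b * c) * p' + (b + a * c) * q' + (c + a * b) * r')
          * (p' * q' * r') := by
  obtain ⟨hp0, hp1⟩ := hp'
  obtain ⟨hq0, hq1⟩ := hq'
  obtain ⟨hr0, hr1⟩ := hr'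
  have hsp : (0:ℝ) < 1 - p' ^ 2 := by nlinarith
  have hsq : (0:ℝ) < 1 - q' ^ 2 := by nlinarith
  have hsr : (0:ℝ) < 1 - r' ^ 2 := by nlinarith
  set u := Real.sqrt (1 - p' ^ 2) with hu
  set v := Real.sqrt (1 - q' ^ 2) with hv
  set w := Real.sqrt (1 - r' ^ 2) with hw
  have hu0 : 0 < u := Real.sqrt_pos.mpr hsp
  have hv0 : 0 < v := Real.sqrt_pos.mpr hsq
  have hw0 : 0 < w := Real.sqrt_pos.mpr hsr
  have hu2 : u ^ 2 = 1 - p' ^ 2 := Real.sq_sqrt hsp.le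
  have hv2 : v ^ 2 = 1 - q' ^ 2 := Real.sq_sqrt hsq.le
  have hw2 : w ^ 2 = 1 - r' ^ 2 := Real.sq_sqrt hsr.le
  have hpu : p = u⁻¹ := by rw [hp, rpow_neg_half_eq_inv_sqrt hsp]
  have hqv : q = v⁻¹ := by rw [hq, rpow_neg_half_eq_inv_sqrt hsq]
  have hrw : r = w⁻¹ := by rw [hr, rpow_neg_half_eq_inv_sqrt hsr]
  have hspu : Real.sqrt (p ^ 2 - 1) = p' / u := by
    rw [show p ^ 2 - 1 = (p' / u) ^ 2 by
      rw [hpu]; field_simp; nlinarith [hu2]]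
    exact Real.sqrt_sq (by positivity)
  have hsqv : Real.sqrt (q ^ 2 - 1) = q' / v := by
    rw [show q ^ 2 - 1 = (q' / v) ^ 2 by
      rw [hqv]; field_simp; nlinarith [hv2]]
    exact Real.sqrt_sq (by positivity)
  have hsrw : Real.sqrt (r ^ 2 - 1) = r' / w := by
    rw [show r ^ 2 - 1 = (r' / w) ^ 2 by
      rw [hrw]; field_simp; nlinarith [hw2]]
    exact Real.sqrt_sq (by positivity)
  have key : u ^ 2 * v ^ 2 * w ^ 2 * Xi =
      v ^ 2 * w ^ 2 + u ^ 2 * w ^ 2 + u ^ 2 * v ^ 2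
        + 2 * ((1 + a * q' * r') * (1 + b * r' * p')
            + (1 + a * q' * r') * (1 + c * p' * q')
            + (1 + b * r' * p') * (1 + c * p' * q'))
        - (1 + a * q' * r') ^ 2 - (1 + b * r' * p') ^ 2 - (1 + c * p' * q') ^ 2
        - 2 * (1 + c * p' * q') * w ^ 2 - 2 * (1 + b * r' * p') * v ^ 2
        - 2 * (1 + a * q' * r') * u ^ 2 := by
    rw [hXi, hx, hy, hz, hspu, hsqv, hsrw, hpu, hqv, hrw]
    field_simp
    ring
  calc (1 - p' ^ 2) * (1 - q' ^ 2) * (1 - r' ^ 2) * Xi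
      = u ^ 2 * v ^ 2 * w ^ 2 * Xi := by rw [hu2, hv2, hw2]
    _ = _ := by rw [key, hu2, hv2, hw2]; ring
end

section
/- Under the hypotheses p, q, r > 1, a, b, c > 1 and Ξ > 0 (with x, y, z, Ξ defined as before), the quantities satisfy the hyperbolic triangle inequalities: letting X = arccosh x, Y = arccosh y, Z = arccosh z, we have X < Y + Z, Y < X + Z, and Z < X + Y. -/
/-- The inverse of `Real.cosh` on `[1, ∞)`. -/
noncomputable def arcosh (t : ℝ) : ℝ := Real.log (t + Real.sqrt (t ^ 2 - 1))

lemma arcosh_key (x y z : ℝ) (hx : 1 < x) (hy : 1 < y) (hz : 1 < z)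
    (hG : 0 < 1 + 2 * x * y * z - x ^ 2 - y ^ 2 - z ^ 2) :
    arcosh x < arcosh y + arcosh z := by
  have hy2 : (0:ℝ) < y ^ 2 - 1 := by nlinarith
  have hz2 : (0:ℝ) < z ^ 2 - 1 := by nlinarith
  set sy := Real.sqrt (y ^ 2 - 1) with hsydef
  set sz := Real.sqrt (z ^ 2 - 1) with hszdef
  have hsy : sy ^ 2 = y ^ 2 - 1 := Real.sq_sqrt hy2.le
  have hsz : sz ^ 2 = z ^ 2 - 1 := Real.sq_sqrt hz2.le
  have hsypos : 0 < sy := Real.sqrt_pos.mpr hy2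
  have hszpos : 0 < sz := Real.sqrt_pos.mpr hz2
  set w := y * z + sy * sz with hwdef
  have hxw : x < w := by
    rcases le_or_gt x (y * z) with h | h
    · have : 0 < sy * sz := mul_pos hsypos hszpos
      simp only [hwdef]; linarith
    · have h2 : (x - y * z) ^ 2 < (sy * sz) ^ 2 := by
        have e : (sy * sz) ^ 2 - (x - y * z) ^ 2
            = 1 + 2 * x * y * z - x ^ 2 - y ^ 2 - z ^ 2 := by
          linear_combination sz ^ 2 * hsy + (y ^ 2 - 1) * hsz
        linarith
      have := lt_of_pow_lt_pow_left₀ 2 (mul_pos hsypos hszpos).le h2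
      simp only [hwdef]; linarith
  have hw1 : 1 < w := lt_trans hx hxw
  have hw2sq : w ^ 2 - 1 = (y * sz + z * sy) ^ 2 := by
    simp only [hwdef]
    linear_combination (sz ^ 2 - z ^ 2) * hsy - hsz
  have hsw : Real.sqrt (w ^ 2 - 1) = y * sz + z * sy := by
    rw [hw2sq, Real.sqrt_sq (by positivity)]
  have hx2 : (0:ℝ) ≤ x ^ 2 - 1 := by nlinarith
  have h1 : arcosh w = arcosh y + arcosh z := by
    unfold arcosh
    rw [← Real.log_mul (by positivity) (by positivity)]
    congr 1
    rw [hsw, ← hsydef, ← hszdef]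
    simp only [hwdef]; ring
  have h2 : arcosh x < arcosh w := by
    unfold arcosh
    apply Real.log_lt_log (by positivity)
    have hsle : Real.sqrt (x ^ 2 - 1) ≤ Real.sqrt (w ^ 2 - 1) := by
      apply Real.sqrt_le_sqrt; nlinarith
    linarith
  linarith

set_option maxHeartbeats 1600000 in
theorem xi_pos_triangle_ineq (p q r a b c : ℝ)
    (hp : 1 < p) (hq : 1 < q) (hr : 1 < r)
    (ha : 1 < a) (hb : 1 < b) (hc : 1 < c)
    (x y z Xi : ℝ)
    (hx : x = q * r + a * Real.sqrt (q ^ 2 - 1) * Real.sqrt (r ^ 2 - 1))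
    (hy : y = r * p + b * Real.sqrt (r ^ 2 - 1) * Real.sqrt (p ^ 2 - 1))
    (hz : z = p * q + c * Real.sqrt (p ^ 2 - 1) * Real.sqrt (q ^ 2 - 1))
    (hXi : Xi = p ^ 2 * (1 - x ^ 2) + q ^ 2 * (1 - y ^ 2) + r ^ 2 * (1 - z ^ 2)
      + 2 * p * q * (x * y - z) + 2 * p * r * (x * z - y) + 2 * q * r * (y * z - x))
    (hXipos : 0 < Xi) :
    arcosh x < arcosh y + arcosh z ∧
    arcosh y < arcosh x + arcosh z ∧
    arcosh z < arcosh x + arcosh y := by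
  have hp2 : (0:ℝ) < p ^ 2 - 1 := by nlinarith
  have hq2 : (0:ℝ) < q ^ 2 - 1 := by nlinarith
  have hr2 : (0:ℝ) < r ^ 2 - 1 := by nlinarith
  set sp := Real.sqrt (p ^ 2 - 1) with hspdef
  set sq := Real.sqrt (q ^ 2 - 1) with hsqdef
  set sr := Real.sqrt (r ^ 2 - 1) with hsrdef
  have hsp : sp ^ 2 = p ^ 2 - 1 := Real.sq_sqrt hp2.le
  have hsq : sq ^ 2 = q ^ 2 - 1 := Real.sq_sqrt hq2.le
  have hsr : sr ^ 2 = r ^ 2 - 1 := Real.sq_sqrt hr2.le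
  have hsppos : 0 < sp := Real.sqrt_pos.mpr hp2
  have hsqpos : 0 < sq := Real.sqrt_pos.mpr hq2
  have hsrpos : 0 < sr := Real.sqrt_pos.mpr hr2
  have hx1 : 1 < x := by
    rw [hx]
    nlinarith [mul_pos (mul_pos (lt_trans zero_lt_one ha) hsqpos) hsrpos]
  have hy1 : 1 < y := by
    rw [hy]
    nlinarith [mul_pos (mul_pos (lt_trans zero_lt_one hb) hsrpos) hsppos]
  have hz1 : 1 < z := by
    rw [hz]
    nlinarith [mul_pos (mul_pos (lt_trans zero_lt_one hc) hsppos) hsqpos]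
  have hid : 1 + 2 * x * y * z - x ^ 2 - y ^ 2 - z ^ 2
      = Xi + (a ^ 2 + b ^ 2 + c ^ 2 + 2 * a * b * c - 1)
        * ((p ^ 2 - 1) * ((q ^ 2 - 1) * (r ^ 2 - 1))) := by
    rw [hx, hy, hz, hXi, hx, hy, hz]
    linear_combination
      (-(c ^ 2 * sq ^ 2) - b ^ 2 * sr ^ 2 + 2 * a * b * c * sq ^ 2 * sr ^ 2
        + r ^ 2 * c ^ 2 * sq ^ 2 + q ^ 2 * b ^ 2 * sr ^ 2) * hsp
      + (c ^ 2 - 2 * a * b * c * sr ^ 2 - a ^ 2 * sr ^ 2 - r ^ 2 * c ^ 2 - p ^ 2 * c ^ 2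
        + 2 * p ^ 2 * a * b * c * sr ^ 2 + p ^ 2 * a ^ 2 * sr ^ 2 + p ^ 2 * r ^ 2 * c ^ 2) * hsq
      + (b ^ 2 + 2 * a * b * c + a ^ 2 - q ^ 2 * b ^ 2 - 2 * q ^ 2 * a * b * c - q ^ 2 * a ^ 2
        - p ^ 2 * b ^ 2 - 2 * p ^ 2 * a * b * c - p ^ 2 * a ^ 2 + p ^ 2 * q ^ 2 * b ^ 2
        + 2 * p ^ 2 * q ^ 2 * a * b * c + p ^ 2 * q ^ 2 * a ^ 2) * hsr
  have habc : 0 < a ^ 2 + b ^ 2 + c ^ 2 + 2 * a * b * c - 1 := by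
    nlinarith [mul_pos (mul_pos (lt_trans zero_lt_one ha) (lt_trans zero_lt_one hb)) (lt_trans zero_lt_one hc), sq_nonneg a, sq_nonneg b, sq_nonneg c]
  have hprod : 0 < (a ^ 2 + b ^ 2 + c ^ 2 + 2 * a * b * c - 1)
      * ((p ^ 2 - 1) * ((q ^ 2 - 1) * (r ^ 2 - 1))) := by positivity
  have hG : 0 < 1 + 2 * x * y * z - x ^ 2 - y ^ 2 - z ^ 2 := by
    rw [hid]; linarith
  refine ⟨arcosh_key x y z hx1 hy1 hz1 hG, arcosh_key y x z hy1 hx1 hz1 ?_,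
    arcosh_key z x y hz1 hx1 hy1 ?_⟩
  · have e : 1 + 2 * y * x * z - y ^ 2 - x ^ 2 - z ^ 2
        = 1 + 2 * x * y * z - x ^ 2 - y ^ 2 - z ^ 2 := by ring
    linarith [e ▸ hG]
  · have e : 1 + 2 * z * x * y - z ^ 2 - x ^ 2 - y ^ 2
        = 1 + 2 * x * y * z - x ^ 2 - y ^ 2 - z ^ 2 := by ring
    linarith [e ▸ hG]
end

section
/- If x, y, z > 1 are real numbers with 1 + 2xyz − x² − y² − z² > 0, then arccosh x < arccosh y + arccosh z (and similarly for the other permutations). -/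
lemma arcosh_lt_arcosh {a b : ℝ} (ha : 1 ≤ a) (hab : a < b) :
    arcosh a < arcosh b := by
  unfold arcosh
  have h1 : (0:ℝ) < a + Real.sqrt (a ^ 2 - 1) := by positivity
  apply Real.log_lt_log h1
  have : Real.sqrt (a ^ 2 - 1) ≤ Real.sqrt (b ^ 2 - 1) := by
    apply Real.sqrt_le_sqrt; nlinarith
  linarith

lemma arcosh_add {y z : ℝ} (hy : 1 < y) (hz : 1 < z) :
    arcosh y + arcosh z
      = arcosh (y * z + Real.sqrt (y ^ 2 - 1) * Real.sqrt (z ^ 2 - 1)) := by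
  set s := Real.sqrt (y ^ 2 - 1) with hs
  set t := Real.sqrt (z ^ 2 - 1) with ht
  have hs0 : 0 ≤ s := Real.sqrt_nonneg _
  have ht0 : 0 ≤ t := Real.sqrt_nonneg _
  have hs2 : s ^ 2 = y ^ 2 - 1 := Real.sq_sqrt (by nlinarith)
  have ht2 : t ^ 2 = z ^ 2 - 1 := Real.sq_sqrt (by nlinarith)
  have hC : (y * z + s * t) ^ 2 - 1 = (y * t + z * s) ^ 2 := by nlinarith
  unfold arcosh
  rw [← hs, ← ht, hC, Real.sqrt_sq (by positivity),
    ← Real.log_mul (by positivity) (by positivity)]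
  ring_nf

lemma key {x y z : ℝ} (hx : 1 < x) (hy : 1 < y) (hz : 1 < z)
    (h : 0 < 1 + 2 * x * y * z - x ^ 2 - y ^ 2 - z ^ 2) :
    arcosh x < arcosh y + arcosh z := by
  rw [arcosh_add hy hz]
  apply arcosh_lt_arcosh hx.le
  set s := Real.sqrt (y ^ 2 - 1) with hs
  set t := Real.sqrt (z ^ 2 - 1) with ht
  have hs0 : 0 ≤ s := Real.sqrt_nonneg _
  have ht0 : 0 ≤ t := Real.sqrt_nonneg _
  have hs2 : s ^ 2 = y ^ 2 - 1 := Real.sq_sqrt (by nlinarith)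
  have ht2 : t ^ 2 = z ^ 2 - 1 := Real.sq_sqrt (by nlinarith)
  nlinarith [sq_nonneg (x - y * z - s * t), mul_nonneg hs0 ht0]

theorem gram_pos_triangle_ineq (x y z : ℝ)
    (hx : 1 < x) (hy : 1 < y) (hz : 1 < z)
    (h : 0 < 1 + 2 * x * y * z - x ^ 2 - y ^ 2 - z ^ 2) :
    arcosh x < arcosh y + arcosh z ∧
    arcosh y < arcosh x + arcosh z ∧
    arcosh z < arcosh x + arcosh y := by
  refine ⟨key hx hy hz h, key hy hx hz (by nlinarith), key hz hx hy (by nlinarith)⟩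
end

section
/- Let p, q, r > 1, a, b, c > 1 with Δ_{abc} = a² + b² + c² + 2abc − 1, and x, y, z, Ξ defined as before with Ξ > 0. Then 1 + 2xyz − x² − y² − z² > 0, and the number ρ defined by cosh²ρ = (1 + 2xyz − x² − y² − z²)/Ξ satisfies sinh²ρ = (p² − 1)(q² − 1)(r² − 1)·Δ_{abc}/Ξ. -/
set_option maxHeartbeats 1000000

theorem orthogonal_circle_radius (p q r a b c : ℝ)
    (hp : 1 < p) (hq : 1 < q) (hr : 1 < r)
    (ha : 1 < a) (hb : 1 < b) (hc : 1 < c)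
    (x y z Xi ρ : ℝ)
    (hx : x = q * r + a * Real.sqrt (q ^ 2 - 1) * Real.sqrt (r ^ 2 - 1))
    (hy : y = r * p + b * Real.sqrt (r ^ 2 - 1) * Real.sqrt (p ^ 2 - 1))
    (hz : z = p * q + c * Real.sqrt (p ^ 2 - 1) * Real.sqrt (q ^ 2 - 1))
    (hXi : Xi = p ^ 2 * (1 - x ^ 2) + q ^ 2 * (1 - y ^ 2) + r ^ 2 * (1 - z ^ 2)
      + 2 * p * q * (x * y - z) + 2 * p * r * (x * z - y) + 2 * q * r * (y * z - x))
    (hXipos : 0 < Xi)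
    (hρ : Real.cosh ρ ^ 2 = (1 + 2 * x * y * z - x ^ 2 - y ^ 2 - z ^ 2) / Xi) :
    0 < 1 + 2 * x * y * z - x ^ 2 - y ^ 2 - z ^ 2 ∧
    Real.sinh ρ ^ 2 = (p ^ 2 - 1) * (q ^ 2 - 1) * (r ^ 2 - 1)
      * (a ^ 2 + b ^ 2 + c ^ 2 + 2 * a * b * c - 1) / Xi := by
  set P := Real.sqrt (p ^ 2 - 1) with hPdef
  set Q := Real.sqrt (q ^ 2 - 1) with hQdef
  set R := Real.sqrt (r ^ 2 - 1) with hRdef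
  have hP2 : P ^ 2 = p ^ 2 - 1 := Real.sq_sqrt (by nlinarith)
  have hQ2 : Q ^ 2 = q ^ 2 - 1 := Real.sq_sqrt (by nlinarith)
  have hR2 : R ^ 2 = r ^ 2 - 1 := Real.sq_sqrt (by nlinarith)
  have key : 1 + 2 * x * y * z - x ^ 2 - y ^ 2 - z ^ 2 - Xi
      = (p ^ 2 - 1) * (q ^ 2 - 1) * (r ^ 2 - 1)
        * (a ^ 2 + b ^ 2 + c ^ 2 + 2 * a * b * c - 1) := by
    subst hx hy hz hXi
    linear_combination
      (-c^2*Q^2 - b^2*R^2 + 2*a*b*c*Q^2*R^2 + r^2*c^2*Q^2 + q^2*b^2*R^2) * hP2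
      + (c^2 - 2*a*b*c*R^2 - a^2*R^2 - r^2*c^2 - p^2*c^2 + 2*p^2*a*b*c*R^2
        + p^2*a^2*R^2 + p^2*r^2*c^2) * hQ2
      + (b^2 + 2*a*b*c + a^2 - q^2*b^2 - 2*q^2*a*b*c - q^2*a^2 - p^2*b^2
        - 2*p^2*a*b*c - p^2*a^2 + p^2*q^2*b^2 + 2*p^2*q^2*a*b*c + p^2*q^2*a^2) * hR2
  have hp2 : (0:ℝ) < p ^ 2 - 1 := by nlinarith
  have hq2 : (0:ℝ) < q ^ 2 - 1 := by nlinarith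
  have hr2 : (0:ℝ) < r ^ 2 - 1 := by nlinarith
  have habc : (0:ℝ) < a * b * c :=
    mul_pos (mul_pos (zero_lt_one.trans ha) (zero_lt_one.trans hb)) (zero_lt_one.trans hc)
  have ha2 : (1:ℝ) < a ^ 2 := by nlinarith
  have hD : 0 < a ^ 2 + b ^ 2 + c ^ 2 + 2 * a * b * c - 1 := by
    nlinarith [sq_nonneg b, sq_nonneg c]
  have hprod : 0 < (p ^ 2 - 1) * (q ^ 2 - 1) * (r ^ 2 - 1)
      * (a ^ 2 + b ^ 2 + c ^ 2 + 2 * a * b * c - 1) :=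
    mul_pos (mul_pos (mul_pos hp2 hq2) hr2) hD
  constructor
  · linarith [key, hXipos, hprod]
  · rw [Real.sinh_sq, hρ, div_sub_one hXipos.ne', key]
end

section
/- Let q̂, ŝ ∈ (0,1) and a, d, e > 1 with Δ_{ade} = a² + d² + e² + 2ade − 1 > 0. Define Ĝ(p̂) = p̂² + (a q̂ + d ŝ)p̂ − e q̂ ŝ + √(p̂² + 2a p̂ q̂ + q̂²)·√(p̂² + 2d p̂ ŝ + ŝ²) for p̂ > 0. Then Ĝ is strictly increasing on (0, ∞) and has a unique zero at p̂₀ = (e² − 1) q̂ ŝ / (√(q̂² + ŝ² + 2e q̂ ŝ)·√(Δ_{ade}) + (ae + d)q̂ + (de + a)ŝ). -/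
set_option maxHeartbeats 1000000

private lemma aux_AB (q' s' a d e X p₀ : ℝ)
    (he1 : (0:ℝ) < e ^ 2 - 1)
    (hX2 : X ^ 2 = (q' ^ 2 + s' ^ 2 + 2 * e * q' * s')
      * (a ^ 2 + d ^ 2 + e ^ 2 + 2 * a * d * e - 1))
    (hpden : p₀ * (X + (a * e + d) * q' + (d * e + a) * s') = (e ^ 2 - 1) * q' * s') :
    (p₀ ^ 2 + 2 * a * p₀ * q' + q' ^ 2) * (p₀ ^ 2 + 2 * d * p₀ * s' + s' ^ 2)
      = (e * q' * s' - p₀ ^ 2 - (a * q' + d * s') * p₀) ^ 2 := by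
  have hkey : (e ^ 2 - 1) * ((p₀ ^ 2 + 2 * a * p₀ * q' + q' ^ 2)
        * (p₀ ^ 2 + 2 * d * p₀ * s' + s' ^ 2)
      - (e * q' * s' - p₀ ^ 2 - (a * q' + d * s') * p₀) ^ 2) = 0 := by
    linear_combination (p₀ * X + (e ^ 2 - 1) * q' * s'
        - p₀ * ((a * e + d) * q' + (d * e + a) * s')) * hpden + (- p₀ ^ 2) * hX2
  have h := (mul_eq_zero.mp hkey).resolve_left (ne_of_gt he1)
  linarith [h]

private lemma aux_Rnn (q' s' a d e X p₀ : ℝ)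
    (hq0 : 0 < q') (hs0 : 0 < s')
    (ha : 1 < a) (hd : 1 < d) (he : 1 < e)
    (hXnn : 0 ≤ X)
    (hX2 : X ^ 2 = (q' ^ 2 + s' ^ 2 + 2 * e * q' * s')
      * (a ^ 2 + d ^ 2 + e ^ 2 + 2 * a * d * e - 1))
    (hpden : p₀ * (X + (a * e + d) * q' + (d * e + a) * s') = (e ^ 2 - 1) * q' * s') :
    0 ≤ e * q' * s' - p₀ ^ 2 - (a * q' + d * s') * p₀ := by
  have ha0 : (0:ℝ) < a := lt_trans one_pos ha
  have hd0 : (0:ℝ) < d := lt_trans one_pos hd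
  have he0 : (0:ℝ) < e := lt_trans one_pos he
  have hqs : 0 < q' * s' := mul_pos hq0 hs0
  have hL0 : (0:ℝ) < (a * e + d) * q' + (d * e + a) * s' := by
    nlinarith [mul_pos (mul_pos ha0 he0) hq0, mul_pos hd0 hq0,
      mul_pos (mul_pos hd0 he0) hs0, mul_pos ha0 hs0]
  have hLp0 : (0:ℝ) < (d * e + a) * q' + (a * e + d) * s' := by
    nlinarith [mul_pos (mul_pos hd0 he0) hq0, mul_pos ha0 hq0,
      mul_pos (mul_pos ha0 he0) hs0, mul_pos hd0 hs0]
  have hT0 : (0:ℝ) ≤ q' ^ 2 + s' ^ 2 + 2 * e * q' * s' := by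
    nlinarith [sq_nonneg q', sq_nonneg s', mul_pos (mul_pos he0 hq0) hs0]
  have hT : 2 * (e + 1) * (q' * s') ≤ q' ^ 2 + s' ^ 2 + 2 * e * q' * s' := by
    nlinarith [sq_nonneg (q' - s')]
  have hΔ : (e + 1) ^ 2 ≤ a ^ 2 + d ^ 2 + e ^ 2 + 2 * a * d * e - 1 := by
    nlinarith [sq_nonneg (a - 1), sq_nonneg (d - 1),
      mul_pos he0 (show (0:ℝ) < a * d - 1 by nlinarith)]
  have h3a : 2 * (e + 1) * (q' * s') * ((e + 1) ^ 2)
      ≤ (q' ^ 2 + s' ^ 2 + 2 * e * q' * s')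
        * (a ^ 2 + d ^ 2 + e ^ 2 + 2 * a * d * e - 1) :=
    mul_le_mul hT hΔ (by positivity) hT0
  have h3 : ((e ^ 2 - 1) * q' * s') ^ 2
      ≤ e * q' * s' * ((q' ^ 2 + s' ^ 2 + 2 * e * q' * s')
        * (a ^ 2 + d ^ 2 + e ^ 2 + 2 * a * d * e - 1)) := by
    have h3b := mul_le_mul_of_nonneg_left h3a (le_of_lt (mul_pos he0 hqs))
    have h4 : 0 ≤ (e + 1) ^ 2 * (e ^ 2 + 4 * e - 1) * (q' * s') ^ 2 :=
      mul_nonneg (mul_nonneg (sq_nonneg _) (by nlinarith)) (sq_nonneg _)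
    linarith [h3b, h4]
  have hsum : e * q' * s' * (X + ((a * e + d) * q' + (d * e + a) * s')) ^ 2
        - ((e ^ 2 - 1) * q' * s') ^ 2
        - (a * q' + d * s') * ((e ^ 2 - 1) * q' * s')
          * (X + ((a * e + d) * q' + (d * e + a) * s'))
      = e * q' * s' * ((q' ^ 2 + s' ^ 2 + 2 * e * q' * s')
          * (a ^ 2 + d ^ 2 + e ^ 2 + 2 * a * d * e - 1))
        + q' * s' * (((a * e + d) * q' + (d * e + a) * s')
          * ((d * e + a) * q' + (a * e + d) * s'))
        + X * (q' * s' * (e * ((a * e + d) * q' + (d * e + a) * s')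
          + ((d * e + a) * q' + (a * e + d) * s')))
        - ((e ^ 2 - 1) * q' * s') ^ 2 := by
    linear_combination (e * q' * s') * hX2
  have t1 : 0 < q' * s' * (((a * e + d) * q' + (d * e + a) * s')
      * ((d * e + a) * q' + (a * e + d) * s')) := mul_pos hqs (mul_pos hL0 hLp0)
  have t2 : 0 ≤ X * (q' * s' * (e * ((a * e + d) * q' + (d * e + a) * s')
      + ((d * e + a) * q' + (a * e + d) * s'))) := by
    have h5 := mul_pos he0 hL0
    exact mul_nonneg hXnn (mul_pos hqs (by linarith)).le
  have h1 : (e * q' * s' - p₀ ^ 2 - (a * q' + d * s') * p₀)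
        * (X + ((a * e + d) * q' + (d * e + a) * s')) ^ 2
      = e * q' * s' * (X + ((a * e + d) * q' + (d * e + a) * s')) ^ 2
        - ((e ^ 2 - 1) * q' * s') ^ 2
        - (a * q' + d * s') * ((e ^ 2 - 1) * q' * s')
          * (X + ((a * e + d) * q' + (d * e + a) * s')) := by
    linear_combination (-((e ^ 2 - 1) * q' * s'
        + p₀ * (X + ((a * e + d) * q' + (d * e + a) * s')))
      - (a * q' + d * s') * (X + ((a * e + d) * q' + (d * e + a) * s'))) * hpden
  have hRden : 0 ≤ (e * q' * s' - p₀ ^ 2 - (a * q' + d * s') * p₀)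
      * (X + ((a * e + d) * q' + (d * e + a) * s')) ^ 2 := by
    rw [h1, hsum]; linarith [h3, t1, t2]
  have hd2 : 0 < (X + ((a * e + d) * q' + (d * e + a) * s')) ^ 2 := by
    apply pow_pos; linarith
  exact le_of_not_gt fun hlt => absurd hRden (not_le.mpr (mul_neg_of_neg_of_pos hlt hd2))

theorem G_strictMono_unique_zero (q' s' a d e : ℝ)
    (hq' : q' ∈ Set.Ioo (0 : ℝ) 1) (hs' : s' ∈ Set.Ioo (0 : ℝ) 1)
    (ha : 1 < a) (hd : 1 < d) (he : 1 < e)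
    (hade : 0 < a ^ 2 + d ^ 2 + e ^ 2 + 2 * a * d * e - 1)
    (G : ℝ → ℝ)
    (hG : ∀ p', G p' = p' ^ 2 + (a * q' + d * s') * p' - e * q' * s'
      + Real.sqrt (p' ^ 2 + 2 * a * p' * q' + q' ^ 2)
        * Real.sqrt (p' ^ 2 + 2 * d * p' * s' + s' ^ 2))
    (p₀ : ℝ)
    (hp₀ : p₀ = (e ^ 2 - 1) * q' * s' /
      (Real.sqrt (q' ^ 2 + s' ^ 2 + 2 * e * q' * s')
        * Real.sqrt (a ^ 2 + d ^ 2 + e ^ 2 + 2 * a * d * e - 1)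
        + (a * e + d) * q' + (d * e + a) * s')) :
    StrictMonoOn G (Set.Ioi 0) ∧ G p₀ = 0 ∧
      ∀ p' ∈ Set.Ioi (0 : ℝ), G p' = 0 → p' = p₀ := by
  obtain ⟨hq0, hq1⟩ := hq'
  obtain ⟨hs0, hs1⟩ := hs'
  have ha0 : (0:ℝ) < a := lt_trans one_pos ha
  have hd0 : (0:ℝ) < d := lt_trans one_pos hd
  have he0 : (0:ℝ) < e := lt_trans one_pos he
  have hqs : 0 < q' * s' := mul_pos hq0 hs0
  have hmono : StrictMonoOn G (Set.Ioi 0) := by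
    intro x hx y hy hxy
    simp only [Set.mem_Ioi] at hx hy
    rw [hG x, hG y]
    have hAx : (0:ℝ) ≤ x ^ 2 + 2 * a * x * q' + q' ^ 2 := by
      nlinarith [sq_nonneg x, sq_nonneg q', mul_pos (mul_pos ha0 hx) hq0]
    have hBx : (0:ℝ) ≤ x ^ 2 + 2 * d * x * s' + s' ^ 2 := by
      nlinarith [sq_nonneg x, sq_nonneg s', mul_pos (mul_pos hd0 hx) hs0]
    have s1 : Real.sqrt (x ^ 2 + 2 * a * x * q' + q' ^ 2)
        < Real.sqrt (y ^ 2 + 2 * a * y * q' + q' ^ 2) := by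
      apply Real.sqrt_lt_sqrt hAx
      nlinarith [mul_pos ha0 hq0]
    have s2 : Real.sqrt (x ^ 2 + 2 * d * x * s' + s' ^ 2)
        < Real.sqrt (y ^ 2 + 2 * d * y * s' + s' ^ 2) := by
      apply Real.sqrt_lt_sqrt hBx
      nlinarith [mul_pos hd0 hs0]
    have hprod := mul_lt_mul'' s1 s2 (Real.sqrt_nonneg _) (Real.sqrt_nonneg _)
    have hlin : (a * q' + d * s') * x < (a * q' + d * s') * y := by
      nlinarith [mul_pos ha0 hq0, mul_pos hd0 hs0]
    have hsq : x ^ 2 < y ^ 2 := by nlinarith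
    linarith [hprod, hlin, hsq]
  obtain ⟨X, hXdef⟩ : ∃ x : ℝ, x = Real.sqrt (q' ^ 2 + s' ^ 2 + 2 * e * q' * s')
      * Real.sqrt (a ^ 2 + d ^ 2 + e ^ 2 + 2 * a * d * e - 1) := ⟨_, rfl⟩
  rw [← hXdef] at hp₀
  have hT0 : (0:ℝ) ≤ q' ^ 2 + s' ^ 2 + 2 * e * q' * s' := by
    nlinarith [sq_nonneg q', sq_nonneg s', mul_pos (mul_pos he0 hq0) hs0]
  have hX2 : X ^ 2 = (q' ^ 2 + s' ^ 2 + 2 * e * q' * s')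
      * (a ^ 2 + d ^ 2 + e ^ 2 + 2 * a * d * e - 1) := by
    rw [hXdef, mul_pow, Real.sq_sqrt hT0, Real.sq_sqrt hade.le]
  have hXnn : 0 ≤ X := hXdef ▸ mul_nonneg (Real.sqrt_nonneg _) (Real.sqrt_nonneg _)
  have hL0 : (0:ℝ) < (a * e + d) * q' + (d * e + a) * s' := by
    nlinarith [mul_pos (mul_pos ha0 he0) hq0, mul_pos hd0 hq0,
      mul_pos (mul_pos hd0 he0) hs0, mul_pos ha0 hs0]
  have hden : 0 < X + (a * e + d) * q' + (d * e + a) * s' := by linarith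
  have hpden : p₀ * (X + (a * e + d) * q' + (d * e + a) * s') = (e ^ 2 - 1) * q' * s' := by
    rw [hp₀]
    exact div_mul_cancel₀ _ (ne_of_gt hden)
  have he1 : (0:ℝ) < e ^ 2 - 1 := by nlinarith
  have hp0 : 0 < p₀ := by
    rw [hp₀]
    exact div_pos (by nlinarith [hqs]) hden
  have hAB := aux_AB q' s' a d e X p₀ he1 hX2 hpden
  have hR := aux_Rnn q' s' a d e X p₀ hq0 hs0 ha hd he hXnn hX2 hpden
  have hGp0 : G p₀ = 0 := by
    rw [hG p₀]
    have hA0 : (0:ℝ) ≤ p₀ ^ 2 + 2 * a * p₀ * q' + q' ^ 2 := by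
      nlinarith [sq_nonneg p₀, sq_nonneg q', mul_pos (mul_pos ha0 hp0) hq0]
    have hsqrt : Real.sqrt (p₀ ^ 2 + 2 * a * p₀ * q' + q' ^ 2)
        * Real.sqrt (p₀ ^ 2 + 2 * d * p₀ * s' + s' ^ 2)
        = e * q' * s' - p₀ ^ 2 - (a * q' + d * s') * p₀ := by
      rw [← Real.sqrt_mul hA0, hAB, Real.sqrt_sq hR]
    rw [hsqrt]; ring
  refine ⟨hmono, hGp0, ?_⟩
  intro p hp hGp
  exact hmono.injOn hp (Set.mem_Ioi.mpr hp0) (by rw [hGp, hGp0])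
end

section
/- Let b, c, e > 1 with Δ_{bce} = b² + c² + e² + 2bce − 1 > 0, and q̂, ŝ ∈ (0,1). If (b² − 1)q̂² − 2(bc + e)q̂ŝ + (c² − 1)ŝ² ≤ 0, then √(q̂² + ŝ² + 2e q̂ ŝ)·√(Δ_{bce}) ≥ (be + c)q̂ + (ce + b)ŝ. -/
theorem sqrt_delta_lower_bound (b c e q' s' : ℝ)
    (hb : 1 < b) (hc : 1 < c) (he : 1 < e)
    (hbce : 0 < b ^ 2 + c ^ 2 + e ^ 2 + 2 * b * c * e - 1)
    (hq' : q' ∈ Set.Ioo (0 : ℝ) 1) (hs' : s' ∈ Set.Ioo (0 : ℝ) 1)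
    (h : (b ^ 2 - 1) * q' ^ 2 - 2 * (b * c + e) * q' * s'
      + (c ^ 2 - 1) * s' ^ 2 ≤ 0) :
    Real.sqrt (q' ^ 2 + s' ^ 2 + 2 * e * q' * s')
      * Real.sqrt (b ^ 2 + c ^ 2 + e ^ 2 + 2 * b * c * e - 1)
      ≥ (b * e + c) * q' + (c * e + b) * s' := by
  obtain ⟨hq0, hq1⟩ := hq'
  obtain ⟨hs0, hs1⟩ := hs'
  have hA : 0 ≤ q' ^ 2 + s' ^ 2 + 2 * e * q' * s' := by positivity
  rw [← Real.sqrt_mul hA]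
  have hR : 0 ≤ (b * e + c) * q' + (c * e + b) * s' := by positivity
  rw [ge_iff_le, Real.le_sqrt hR]
  nlinarith [mul_nonneg (sub_nonneg.2 (one_le_pow_iff_of_nonneg (by linarith) two_ne_zero |>.2 he.le)) (neg_nonneg.2 h)]
  positivity
end

section
/- Let u, v, w, x, y, z be the hyperbolic cosines of the six distances among four points forming two triangles glued along a common edge (a hinge), with y the cosine of the common edge and z of the flipped diagonal. Then u²w² + v²x² + y²z² − u² − v² − w² − x² − y² − z² + 1 − 2(uvwx + uwyz + vxyz − vwy − uxy − uvz − wxz) = 0. -/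
open UpperHalfPlane

/-- The hinge relation for four points in the hyperbolic plane:
with `u, v, w, x, y, z` the hyperbolic cosines of the six pairwise distances
of the four points `v_k, v_i, v_l, v_j` of a hinge (`y` for the common edge
`v_i v_j` and `z` for the flipped diagonal `v_k v_l`), the stated polynomial
relation holds. -/
theorem hinge_relation (vk vi vl vj : UpperHalfPlane)
    (u v w x y z : ℝ)
    (hu : u = Real.cosh (dist vk vi))
    (hv : v = Real.cosh (dist vi vl))
    (hw : w = Real.cosh (dist vl vj))
    (hx : x = Real.cosh (dist vj vk))
    (hy : y = Real.cosh (dist vi vj))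
    (hz : z = Real.cosh (dist vk vl)) :
    u ^ 2 * w ^ 2 + v ^ 2 * x ^ 2 + y ^ 2 * z ^ 2
      - u ^ 2 - v ^ 2 - w ^ 2 - x ^ 2 - y ^ 2 - z ^ 2 + 1
      - 2 * (u * v * w * x + u * w * y * z + v * x * y * z
        - v * w * y - u * x * y - u * v * z - w * x * z) = 0 := by
  have hk := vk.im_pos.ne'
  have hi := vi.im_pos.ne'
  have hl := vl.im_pos.ne'
  have hj := vj.im_pos.ne'
  have key : ∀ p q : UpperHalfPlane, Real.cosh (dist p q) =
      1 + (((p : ℂ).re - (q : ℂ).re) ^ 2 + ((p : ℂ).im - (q : ℂ).im) ^ 2)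
        / (2 * p.im * q.im) := by
    intro p q
    rw [UpperHalfPlane.cosh_dist, Complex.dist_eq, ← Complex.normSq_eq_norm_sq,
      Complex.normSq_apply]
    simp [Complex.sub_re, Complex.sub_im]
    ring_nf
  rw [key] at hu hv hw hx hy hz
  simp only [UpperHalfPlane.coe_im] at *
  subst hu hv hw hx hy hz
  field_simp
  ring
end

section
/- Let ρ_k, ρ_l > 0 and h_k, h_l ∈ ℝ satisfy cosh h_k / cosh ρ_k = cosh h_l / cosh ρ_l < 1. Then the function h ↦ sinh h / sinh ρ (with cosh ρ determined so that cosh h / cosh ρ is the given constant) is such that sinh h_k / sinh ρ_k + sinh h_l / sinh ρ_l ≥ 0 if and only if h_k + h_l ≥ 0. -/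
/-- The function `u ↦ u / √(u² + c)` is strictly monotone for `c > 0`. -/
lemma strictMono_div_sqrt_sq_add (c : ℝ) (hc : 0 < c) :
    StrictMono (fun u : ℝ => u / Real.sqrt (u ^ 2 + c)) := by
  apply strictMono_of_deriv_pos
  intro u
  have hpos : 0 < u ^ 2 + c := by positivity
  have hs : 0 < Real.sqrt (u ^ 2 + c) := Real.sqrt_pos.mpr hpos
  have h1 : HasDerivAt (fun u : ℝ => u ^ 2 + c) (2 * u) u := by
    simpa using (hasDerivAt_pow 2 u).add_const c
  have h2 : HasDerivAt (fun u : ℝ => Real.sqrt (u ^ 2 + c))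
      (1 / (2 * Real.sqrt (u ^ 2 + c)) * (2 * u)) u :=
    (Real.hasDerivAt_sqrt (ne_of_gt hpos)).comp u h1
  have h3 : HasDerivAt (fun u : ℝ => u / Real.sqrt (u ^ 2 + c))
      ((1 * Real.sqrt (u ^ 2 + c) - u * (1 / (2 * Real.sqrt (u ^ 2 + c)) * (2 * u))) /
        (Real.sqrt (u ^ 2 + c)) ^ 2) u :=
    (hasDerivAt_id u).div h2 (ne_of_gt hs)
  rw [h3.deriv]
  have hsq : (Real.sqrt (u ^ 2 + c)) ^ 2 = u ^ 2 + c := Real.sq_sqrt hpos.le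
  have hnum : 1 * Real.sqrt (u ^ 2 + c) - u * (1 / (2 * Real.sqrt (u ^ 2 + c)) * (2 * u))
      = c / Real.sqrt (u ^ 2 + c) := by
    field_simp
    nlinarith [hsq]
  rw [hnum]
  positivity

theorem sinh_ratio_sum_nonneg_iff (ρk ρl hk hl : ℝ)
    (hρk : 0 < ρk) (hρl : 0 < ρl)
    (heq : Real.cosh hk / Real.cosh ρk = Real.cosh hl / Real.cosh ρl)
    (hlt : Real.cosh hk / Real.cosh ρk < 1) :
    0 ≤ Real.sinh hk / Real.sinh ρk + Real.sinh hl / Real.sinh ρl ↔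
      0 ≤ hk + hl := by
  set lam := Real.cosh hk / Real.cosh ρk with hlam
  have hlam0 : 0 < lam := div_pos (Real.cosh_pos hk) (Real.cosh_pos ρk)
  have hlam1 : lam < 1 := hlt
  set c := 1 - lam ^ 2 with hcdef
  have hc : 0 < c := by nlinarith
  have key : ∀ ρ h : ℝ, 0 < ρ → Real.cosh h / Real.cosh ρ = lam →
      Real.sinh h / Real.sinh ρ = lam * (Real.sinh h / Real.sqrt (Real.sinh h ^ 2 + c)) := by
    intro ρ h hρ hl'
    have hs : 0 < Real.sinh ρ := Real.sinh_pos_iff.mpr hρ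
    have hcosh : Real.cosh h = lam * Real.cosh ρ := by
      field_simp at hl'
      linarith [hl']
    have h1 : Real.cosh h ^ 2 = Real.sinh h ^ 2 + 1 := by
      have := Real.cosh_sq h; linarith
    have h2 : Real.cosh ρ ^ 2 = Real.sinh ρ ^ 2 + 1 := by
      have := Real.cosh_sq ρ; linarith
    have hsqrt : Real.sqrt (Real.sinh h ^ 2 + c) = lam * Real.sinh ρ := by
      have h4 : Real.cosh h ^ 2 = lam ^ 2 * Real.cosh ρ ^ 2 := by rw [hcosh]; ring
      have : Real.sinh h ^ 2 + c = (lam * Real.sinh ρ) ^ 2 := by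
        rw [hcdef]; nlinarith [h1, h2, h4]
      rw [this, Real.sqrt_sq (by positivity)]
    rw [hsqrt]
    field_simp
  have ek := key ρk hk hρk rfl
  have el := key ρl hl hρl heq.symm
  rw [ek, el, ← mul_add, mul_nonneg_iff_of_pos_left hlam0]
  have hmono := strictMono_div_sqrt_sq_add c hc
  have hodd : ∀ x : ℝ, (-x) / Real.sqrt ((-x) ^ 2 + c) = -(x / Real.sqrt (x ^ 2 + c)) := by
    intro x; rw [neg_sq, neg_div]
  constructor
  · intro hsum
    by_contra hneg
    push_neg at hneg
    have h1 : hk < -hl := by linarith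
    have h2 : Real.sinh hk < Real.sinh (-hl) := Real.sinh_lt_sinh.mpr h1
    rw [Real.sinh_neg] at h2
    have h3 := hmono h2
    simp only at h3
    rw [hodd] at h3
    linarith
  · intro hsum
    have h1 : -hl ≤ hk := by linarith
    have h2 : Real.sinh (-hl) ≤ Real.sinh hk := Real.sinh_le_sinh.mpr h1
    rw [Real.sinh_neg] at h2
    have h3 := hmono.le_iff_le.mpr h2
    rw [hodd] at h3
    linarith
end
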